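/- The Calderon transform maps σ(N₁,N₂,N₃) onto σ_P(2N₁,2N₂,2N₃): for every polynomial p ∈ σ_P(2N₁,2N₂,2N₃) there exist complex coefficients q(k,ℓ,m) (|k|≤N₁, |ℓ|≤N₂, |m|≤N₃) such that the trigonometric polynomial f(α,β,γ) = ∑ q(k,ℓ,m)·exp(i(kα+ℓβ+mγ)) belongs to σ(N₁,N₂,N₃) and p(x,y,z) = ∑ q(k,ℓ,m)·(x+i)^{N₁+k}(x−i)^{N₁−k}(y+i)^{N₂+ℓ}(y−i)^{N₂−ℓ}(z+i)^{N₃+m}(z−i)^{N₃−m} for all real x,y,z. -/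

import Mathlib

open Complex ComplexOrder MvPolynomial

noncomputable section

/-- The lattice box `Δ(N₁,N₂,N₃)`. -/
def Dbox (N₁ N₂ N₃ : ℕ) : Finset (ℤ × ℤ × ℤ) :=
  Finset.Icc (-(N₁ : ℤ), -(N₂ : ℤ), -(N₃ : ℤ)) ((N₁ : ℤ), (N₂ : ℤ), (N₃ : ℤ))

/-- The character `exp(i(kα + ℓβ + mγ))`. -/
def eChar (δ : ℤ × ℤ × ℤ) (v : ℝ × ℝ × ℝ) : ℂ :=
  Complex.exp (Complex.I *
    ((δ.1 : ℂ) * (v.1 : ℂ) + (δ.2.1 : ℂ) * (v.2.1 : ℂ) + (δ.2.2 : ℂ) * (v.2.2 : ℂ)))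

/-- `σ(N₁,N₂,N₃)`: trig polynomials with frequencies in `Δ(N₁,N₂,N₃)` taking only real
nonnegative values. -/
def sigmaSet (N₁ N₂ N₃ : ℕ) : Set ((ℝ × ℝ × ℝ) → ℂ) :=
  { f | (∃ q : ℤ × ℤ × ℤ → ℂ, f = fun v => ∑ δ ∈ Dbox N₁ N₂ N₃, q δ * eChar δ v) ∧
        ∀ v, 0 ≤ f v }

/-- The summand `(x+i)^{N₁+k}(x−i)^{N₁−k}(y+i)^{N₂+ℓ}(y−i)^{N₂−ℓ}(z+i)^{N₃+m}(z−i)^{N₃−m}` of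
the Calderon transform. -/
def calderonTerm (N₁ N₂ N₃ : ℕ) (δ : ℤ × ℤ × ℤ) (x y z : ℝ) : ℂ :=
  ((x : ℂ) + Complex.I) ^ (((N₁ : ℤ) + δ.1).toNat) * ((x : ℂ) - Complex.I) ^ (((N₁ : ℤ) - δ.1).toNat) *
  ((y : ℂ) + Complex.I) ^ (((N₂ : ℤ) + δ.2.1).toNat) * ((y : ℂ) - Complex.I) ^ (((N₂ : ℤ) - δ.2.1).toNat) *
  ((z : ℂ) + Complex.I) ^ (((N₃ : ℤ) + δ.2.2).toNat) * ((z : ℂ) - Complex.I) ^ (((N₃ : ℤ) - δ.2.2).toNat)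

/-! ### Auxiliary machinery -/

/-- The one-variable "Calderon polynomial" `(i(w+1))^a (w-1)^{2N-a}`. -/
def cpoly (N a : ℕ) : Polynomial ℂ :=
  (Polynomial.C Complex.I * (Polynomial.X + 1))^a * (Polynomial.X - 1)^(2*N - a)

/-- Coefficients expressing `x^a` in the Calderon basis. -/
def cc (N a : ℕ) (k : ℤ) : ℂ := (cpoly N a).coeff ((N:ℤ) + k).toNat / (2*Complex.I)^(2*N)

/-- One-variable Calderon basis element. -/
def Bterm (N : ℕ) (k : ℤ) (x : ℝ) : ℂ :=
  ((x:ℂ) + Complex.I)^(((N:ℤ) + k).toNat) * ((x:ℂ) - Complex.I)^(((N:ℤ) - k).toNat)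

lemma cpoly_natDegree_le (N a : ℕ) (ha : a ≤ 2*N) : (cpoly N a).natDegree ≤ 2*N := by
  unfold cpoly
  refine le_trans Polynomial.natDegree_mul_le ?_
  have h1 : (Polynomial.C Complex.I * (Polynomial.X + 1) : Polynomial ℂ).natDegree ≤ 1 := by
    compute_degree
  have h2 : (Polynomial.X - 1 : Polynomial ℂ).natDegree ≤ 1 := by compute_degree
  have g1 := Polynomial.natDegree_pow_le
    (p := (Polynomial.C Complex.I * (Polynomial.X + 1) : Polynomial ℂ)) (n := a)
  have g2 := Polynomial.natDegree_pow_le (p := (Polynomial.X - 1 : Polynomial ℂ)) (n := 2*N - a)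
  have e1 : a * (Polynomial.C Complex.I * (Polynomial.X + 1) : Polynomial ℂ).natDegree ≤ a * 1 :=
    Nat.mul_le_mul_left _ h1
  have e2 : (2*N-a) * (Polynomial.X - 1 : Polynomial ℂ).natDegree ≤ (2*N-a) * 1 :=
    Nat.mul_le_mul_left _ h2
  omega

lemma xsubI_ne (x : ℝ) : (x:ℂ) - Complex.I ≠ 0 := by
  intro h
  have := congrArg Complex.im h
  simp at this

lemma sum_Icc_toNat (N : ℕ) (F : ℕ → ℕ → ℂ) :
    ∑ k ∈ Finset.Icc (-(N:ℤ)) N, F (((N:ℤ) + k).toNat) (((N:ℤ) - k).toNat)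
      = ∑ j ∈ Finset.range (2*N+1), F j (2*N - j) := by
  apply Finset.sum_nbij' (fun k => ((N:ℤ) + k).toNat) (fun j => (j:ℤ) - N)
  · intro k hk
    simp only [Finset.mem_Icc] at hk; simp only [Finset.mem_range]; omega
  · intro j hj
    simp only [Finset.mem_range] at hj; simp only [Finset.mem_Icc]; omega
  · intro k hk
    simp only [Finset.mem_Icc] at hk; omega
  · intro j hj
    simp only [Finset.mem_range] at hj; omega
  · intro k hk
    simp only [Finset.mem_Icc] at hk
    congr 1
    all_goals omega

/-- Core one-variable identity: `x^a = ∑_{|k|≤N} cc(a,k)·(x+i)^{N+k}(x-i)^{N-k}`. -/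
lemma oneD (N a : ℕ) (ha : a ≤ 2*N) (x : ℝ) :
    ∑ k ∈ Finset.Icc (-(N:ℤ)) N, cc N a k * Bterm N k x = (x:ℂ)^a := by
  have hx := xsubI_ne x
  have h2I : (2*Complex.I : ℂ) ≠ 0 := by simp [Complex.I_ne_zero]
  have hre : ∑ k ∈ Finset.Icc (-(N:ℤ)) N, cc N a k * Bterm N k x
      = (∑ j ∈ Finset.range (2*N+1),
          (cpoly N a).coeff j * (((x:ℂ)+Complex.I)^j * ((x:ℂ)-Complex.I)^(2*N-j)))
        / (2*Complex.I)^(2*N) := by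
    rw [Finset.sum_div]
    rw [← sum_Icc_toNat N (fun n m =>
      (cpoly N a).coeff n * (((x:ℂ)+Complex.I)^n * ((x:ℂ)-Complex.I)^m) / (2*Complex.I)^(2*N))]
    apply Finset.sum_congr rfl
    intro k hk
    simp only [cc, Bterm]
    ring
  rw [hre]
  set w : ℂ := ((x:ℂ)+Complex.I)/((x:ℂ)-Complex.I) with hw
  have key : ∑ j ∈ Finset.range (2*N+1),
        (cpoly N a).coeff j * (((x:ℂ)+Complex.I)^j * ((x:ℂ)-Complex.I)^(2*N-j))
      = ((x:ℂ)-Complex.I)^(2*N) * (cpoly N a).eval w := by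
    rw [Polynomial.eval_eq_sum_range'
      (lt_of_le_of_lt (cpoly_natDegree_le N a ha) (Nat.lt_succ_self _)) w]
    rw [Finset.mul_sum]
    apply Finset.sum_congr rfl
    intro j hj
    simp only [Finset.mem_range] at hj
    obtain ⟨m, hm⟩ : ∃ m, 2*N = j + m := ⟨2*N - j, by omega⟩
    rw [hm, hw]
    have hjm : j + m - j = m := by omega
    rw [hjm, div_pow, pow_add]
    field_simp
  rw [key]
  have heval : (cpoly N a).eval w = (Complex.I*(w+1))^a * (w-1)^(2*N-a) := by
    simp [cpoly]
  have h1 : Complex.I*(w+1) = 2*Complex.I*(x:ℂ)/((x:ℂ)-Complex.I) := by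
    rw [hw]; field_simp; ring
  have h2 : w - 1 = 2*Complex.I/((x:ℂ)-Complex.I) := by
    rw [hw]; field_simp; ring
  rw [heval, h1, h2]
  obtain ⟨m, hm⟩ : ∃ m, 2*N = a + m := ⟨2*N - a, by omega⟩
  have hma : 2*N - a = m := by omega
  rw [hma, hm, div_pow, div_pow]
  field_simp
  ring

lemma fubini4 {η : Type*} (s₁ s₂ s₃ : Finset ℤ) (t : Finset η) (A : η → ℂ)
    (f g h : η → ℤ → ℂ) (F G H : ℤ → ℂ) :
    ∑ k ∈ s₁, ∑ ℓ ∈ s₂, ∑ m ∈ s₃,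
      ((∑ d ∈ t, A d * (f d k * (g d ℓ * h d m))) * (F k * (G ℓ * H m)))
    = ∑ d ∈ t, A d * ((∑ k ∈ s₁, f d k * F k) *
        ((∑ ℓ ∈ s₂, g d ℓ * G ℓ) * (∑ m ∈ s₃, h d m * H m))) := by
  have step1 : ∀ k ℓ m, (∑ d ∈ t, A d * (f d k * (g d ℓ * h d m))) * (F k * (G ℓ * H m))
      = ∑ d ∈ t, ((A d * (f d k * F k)) * (g d ℓ * G ℓ)) * (h d m * H m) := by
    intro k ℓ m
    rw [Finset.sum_mul]
    exact Finset.sum_congr rfl fun d _ => by ring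
  simp only [step1]
  calc ∑ k ∈ s₁, ∑ ℓ ∈ s₂, ∑ m ∈ s₃, ∑ d ∈ t,
        ((A d * (f d k * F k)) * (g d ℓ * G ℓ)) * (h d m * H m)
      = ∑ k ∈ s₁, ∑ ℓ ∈ s₂, ∑ d ∈ t, ∑ m ∈ s₃,
        ((A d * (f d k * F k)) * (g d ℓ * G ℓ)) * (h d m * H m) :=
        Finset.sum_congr rfl fun k _ => Finset.sum_congr rfl fun ℓ _ => Finset.sum_comm
    _ = ∑ k ∈ s₁, ∑ d ∈ t, ∑ ℓ ∈ s₂, ∑ m ∈ s₃,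
        ((A d * (f d k * F k)) * (g d ℓ * G ℓ)) * (h d m * H m) :=
        Finset.sum_congr rfl fun k _ => Finset.sum_comm
    _ = ∑ d ∈ t, ∑ k ∈ s₁, ∑ ℓ ∈ s₂, ∑ m ∈ s₃,
        ((A d * (f d k * F k)) * (g d ℓ * G ℓ)) * (h d m * H m) :=
        Finset.sum_comm
    _ = ∑ d ∈ t, A d * ((∑ k ∈ s₁, f d k * F k) *
        ((∑ ℓ ∈ s₂, g d ℓ * G ℓ) * (∑ m ∈ s₃, h d m * H m))) := by
        refine Finset.sum_congr rfl fun d _ => ?_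
        simp only [← Finset.sum_mul, ← Finset.mul_sum]
        ring

/-- The coefficient function of the trigonometric polynomial representing `p`. -/
def qdef (N₁ N₂ N₃ : ℕ) (p : MvPolynomial (Fin 3) ℝ) : ℤ × ℤ × ℤ → ℂ :=
  fun δ => ∑ d ∈ p.support, ((p.coeff d : ℝ) : ℂ) *
    (cc N₁ (d 0) δ.1 * (cc N₂ (d 1) δ.2.1 * cc N₃ (d 2) δ.2.2))

lemma dbox_eq (N₁ N₂ N₃ : ℕ) :
    Dbox N₁ N₂ N₃
      = Finset.Icc (-(N₁:ℤ)) N₁ ×ˢ (Finset.Icc (-(N₂:ℤ)) N₂ ×ˢ Finset.Icc (-(N₃:ℤ)) N₃) := by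
  rfl

lemma calderonTerm_factor (N₁ N₂ N₃ : ℕ) (k ℓ m : ℤ) (x y z : ℝ) :
    calderonTerm N₁ N₂ N₃ (k, ℓ, m) x y z
      = Bterm N₁ k x * (Bterm N₂ ℓ y * Bterm N₃ m z) := by
  simp only [calderonTerm, Bterm]
  ring

/-- The Calderon representation identity. -/
lemma calderon_id (N₁ N₂ N₃ : ℕ) (p : MvPolynomial (Fin 3) ℝ)
    (hdeg : p.degreeOf 0 ≤ 2 * N₁ ∧ p.degreeOf 1 ≤ 2 * N₂ ∧ p.degreeOf 2 ≤ 2 * N₃)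
    (x y z : ℝ) :
    ∑ δ ∈ Dbox N₁ N₂ N₃, qdef N₁ N₂ N₃ p δ * calderonTerm N₁ N₂ N₃ δ x y z
      = ((eval ![x, y, z] p : ℝ) : ℂ) := by
  rw [dbox_eq, Finset.sum_product]
  simp only [Finset.sum_product]
  have lhs_eq : ∀ k ℓ m : ℤ,
      qdef N₁ N₂ N₃ p (k, ℓ, m) * calderonTerm N₁ N₂ N₃ (k, ℓ, m) x y z
        = (∑ d ∈ p.support, ((p.coeff d : ℝ) : ℂ) *
            (cc N₁ (d 0) k * (cc N₂ (d 1) ℓ * cc N₃ (d 2) m)))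
          * (Bterm N₁ k x * (Bterm N₂ ℓ y * Bterm N₃ m z)) := by
    intro k ℓ m
    rw [calderonTerm_factor]
    rfl
  simp only [lhs_eq]
  rw [fubini4]
  rw [MvPolynomial.eval_eq']
  push_cast
  apply Finset.sum_congr rfl
  intro d hd
  have h1 : d 0 ≤ 2*N₁ := MvPolynomial.degreeOf_le_iff.mp hdeg.1 d hd
  have h2 : d 1 ≤ 2*N₂ := MvPolynomial.degreeOf_le_iff.mp hdeg.2.1 d hd
  have h3 : d 2 ≤ 2*N₃ := MvPolynomial.degreeOf_le_iff.mp hdeg.2.2 d hd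
  rw [oneD N₁ (d 0) h1 x, oneD N₂ (d 1) h2 y, oneD N₃ (d 2) h3 z]
  rw [Fin.prod_univ_three]
  simp only [Matrix.cons_val_zero, Matrix.cons_val_one, Matrix.head_cons,
    Matrix.cons_val_two, Matrix.tail_cons]
  push_cast
  ring

lemma sin_half_ne_shift (c : ℝ) (n : ℕ) :
    Real.sin ((c + (if Real.sin (c/2) = 0 then (1:ℝ)/((n:ℝ)+1) else 0)) / 2) ≠ 0 := by
  by_cases h : Real.sin (c/2) = 0
  · rw [if_pos h]
    have harg : (c + 1/((n:ℝ)+1))/2 = c/2 + 1/(2*((n:ℝ)+1)) := by field_simp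
    rw [harg, Real.sin_add, h]
    have hcos : Real.cos (c/2) ≠ 0 := by
      intro h0
      have h2 := Real.sin_sq_add_cos_sq (c/2)
      rw [h, h0] at h2
      norm_num at h2
    have hn1 : (0:ℝ) < (n:ℝ)+1 := by positivity
    have hsin : Real.sin (1/(2*((n:ℝ)+1))) ≠ 0 := by
      apply ne_of_gt
      apply Real.sin_pos_of_pos_of_lt_pi
      · positivity
      · have : (1:ℝ)/(2*((n:ℝ)+1)) ≤ 1/2 := by
          rw [div_le_div_iff₀ (by positivity) (by norm_num)]
          nlinarith
        linarith [Real.pi_gt_three]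
    simp only [zero_mul, zero_add]
    exact mul_ne_zero hcos hsin
  · rw [if_neg h]
    simpa using h

/-- One-variable trigonometric evaluation of the Calderon basis. -/
lemma Bterm_trig (N : ℕ) (k : ℤ) (hk1 : -(N:ℤ) ≤ k) (hk2 : k ≤ N) (θ : ℝ)
    (hs : Real.sin θ ≠ 0) :
    Bterm N k (Real.cos θ / Real.sin θ)
      = Complex.exp (Complex.I * ((k:ℂ) * (2*(θ:ℂ)))) / ((Real.sin θ : ℂ))^(2*N) := by
  have hsC : ((Real.sin θ : ℂ)) ≠ 0 := by exact_mod_cast hs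
  have hsC' : Complex.sin (θ:ℂ) ≠ 0 := by rw [← Complex.ofReal_sin]; exact hsC
  have e1 : ((Real.cos θ / Real.sin θ : ℝ) : ℂ) + Complex.I
      = Complex.exp ((θ:ℂ) * Complex.I) / (Real.sin θ : ℂ) := by
    rw [Complex.exp_mul_I]
    push_cast
    rw [eq_div_iff hsC', add_mul, div_mul_cancel₀ _ hsC']
    ring
  have e2 : ((Real.cos θ / Real.sin θ : ℝ) : ℂ) - Complex.I
      = Complex.exp (-(θ:ℂ) * Complex.I) / (Real.sin θ : ℂ) := by
    rw [Complex.exp_mul_I, Complex.cos_neg, Complex.sin_neg]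
    push_cast
    rw [eq_div_iff hsC', sub_mul, div_mul_cancel₀ _ hsC']
    ring
  set n : ℕ := ((N:ℤ) + k).toNat with hn
  set m : ℕ := ((N:ℤ) - k).toNat with hm
  have hnZ : (n:ℤ) = (N:ℤ) + k := Int.toNat_of_nonneg (by omega)
  have hmZ : (m:ℤ) = (N:ℤ) - k := Int.toNat_of_nonneg (by omega)
  have hnm : n + m = 2*N := by omega
  have hnC : (n:ℂ) = (N:ℂ) + (k:ℂ) := by exact_mod_cast congrArg (Int.cast : ℤ → ℂ) hnZ
  have hmC : (m:ℂ) = (N:ℂ) - (k:ℂ) := by exact_mod_cast congrArg (Int.cast : ℤ → ℂ) hmZ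
  rw [Bterm, e1, e2, div_pow, div_pow, ← Complex.exp_nat_mul, ← Complex.exp_nat_mul,
    div_mul_div_comm, ← Complex.exp_add, ← pow_add, hnm]
  congr 1
  rw [Complex.exp_eq_exp_iff_exists_int]
  refine ⟨0, ?_⟩
  push_cast
  linear_combination ((θ:ℂ) * Complex.I) * hnC - ((θ:ℂ) * Complex.I) * hmC

lemma mem_Dbox (N₁ N₂ N₃ : ℕ) (δ : ℤ × ℤ × ℤ) (hδ : δ ∈ Dbox N₁ N₂ N₃) :
    -(N₁:ℤ) ≤ δ.1 ∧ δ.1 ≤ N₁ ∧ -(N₂:ℤ) ≤ δ.2.1 ∧ δ.2.1 ≤ N₂ ∧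
    -(N₃:ℤ) ≤ δ.2.2 ∧ δ.2.2 ≤ N₃ := by
  simp only [Dbox, Finset.mem_Icc, Prod.le_def] at hδ
  exact ⟨hδ.1.1, hδ.2.1, hδ.1.2.1, hδ.2.2.1, hδ.1.2.2, hδ.2.2.2⟩

/-- At "good" points the trig polynomial equals a sine factor times the Calderon transform. -/
lemma good_point (N₁ N₂ N₃ : ℕ) (q : ℤ × ℤ × ℤ → ℂ) (w : ℝ × ℝ × ℝ)
    (h1 : Real.sin (w.1/2) ≠ 0) (h2 : Real.sin (w.2.1/2) ≠ 0) (h3 : Real.sin (w.2.2/2) ≠ 0) :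
    ∑ δ ∈ Dbox N₁ N₂ N₃, q δ * eChar δ w
      = ((Real.sin (w.1/2)^(2*N₁) * Real.sin (w.2.1/2)^(2*N₂)
          * Real.sin (w.2.2/2)^(2*N₃) : ℝ) : ℂ)
        * ∑ δ ∈ Dbox N₁ N₂ N₃, q δ * calderonTerm N₁ N₂ N₃ δ
            (Real.cos (w.1/2) / Real.sin (w.1/2))
            (Real.cos (w.2.1/2) / Real.sin (w.2.1/2))
            (Real.cos (w.2.2/2) / Real.sin (w.2.2/2)) := by
  rw [Finset.mul_sum]
  apply Finset.sum_congr rfl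
  intro δ hδ
  obtain ⟨hk1, hk2, hl1, hl2, hm1, hm2⟩ := mem_Dbox N₁ N₂ N₃ δ hδ
  obtain ⟨k, ℓ, m⟩ := δ
  simp only at hk1 hk2 hl1 hl2 hm1 hm2
  rw [calderonTerm_factor,
    Bterm_trig N₁ k hk1 hk2 (w.1/2) h1,
    Bterm_trig N₂ ℓ hl1 hl2 (w.2.1/2) h2,
    Bterm_trig N₃ m hm1 hm2 (w.2.2/2) h3]
  have hs1 : ((Real.sin (w.1/2) : ℂ)) ≠ 0 := by exact_mod_cast h1
  have hs2 : ((Real.sin (w.2.1/2) : ℂ)) ≠ 0 := by exact_mod_cast h2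
  have hs3 : ((Real.sin (w.2.2/2) : ℂ)) ≠ 0 := by exact_mod_cast h3
  have hE : eChar (k, ℓ, m) w
      = Complex.exp (Complex.I * ((k:ℂ) * (2*((w.1/2 : ℝ):ℂ))))
        * (Complex.exp (Complex.I * ((ℓ:ℂ) * (2*((w.2.1/2 : ℝ):ℂ))))
        * Complex.exp (Complex.I * ((m:ℂ) * (2*((w.2.2/2 : ℝ):ℂ))))) := by
    rw [eChar, ← Complex.exp_add, ← Complex.exp_add]
    congr 1
    push_cast
    ring
  have hz1 : Complex.sin ((w.1:ℂ) / 2) ≠ 0 := by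
    rw [show ((w.1:ℂ) / 2) = ((w.1/2 : ℝ) : ℂ) by push_cast; ring, ← Complex.ofReal_sin]
    exact_mod_cast h1
  have hz2 : Complex.sin ((w.2.1:ℂ) / 2) ≠ 0 := by
    rw [show ((w.2.1:ℂ) / 2) = ((w.2.1/2 : ℝ) : ℂ) by push_cast; ring, ← Complex.ofReal_sin]
    exact_mod_cast h2
  have hz3 : Complex.sin ((w.2.2:ℂ) / 2) ≠ 0 := by
    rw [show ((w.2.2:ℂ) / 2) = ((w.2.2/2 : ℝ) : ℂ) by push_cast; ring, ← Complex.ofReal_sin]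
    exact_mod_cast h3
  rw [hE]
  field_simp
  push_cast
  ring

lemma f_continuous (N₁ N₂ N₃ : ℕ) (q : ℤ × ℤ × ℤ → ℂ) :
    Continuous (fun w : ℝ × ℝ × ℝ => ∑ δ ∈ Dbox N₁ N₂ N₃, q δ * eChar δ w) := by
  apply continuous_finset_sum
  intro δ _
  apply Continuous.mul continuous_const
  unfold eChar
  apply Complex.continuous_exp.comp
  fun_prop

/-- Half of Proposition 5: the Calderon transform maps `σ(N₁,N₂,N₃)` *onto*
`σ_P(2N₁,2N₂,2N₃)`. -/
theorem calderon_maps_sigma_onto_sigmaP (N₁ N₂ N₃ : ℕ) (p : MvPolynomial (Fin 3) ℝ)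
    (hdeg : p.degreeOf 0 ≤ 2 * N₁ ∧ p.degreeOf 1 ≤ 2 * N₂ ∧ p.degreeOf 2 ≤ 2 * N₃)
    (hpos : ∀ x : Fin 3 → ℝ, 0 ≤ eval x p) :
    ∃ q : ℤ × ℤ × ℤ → ℂ,
      (fun v => ∑ δ ∈ Dbox N₁ N₂ N₃, q δ * eChar δ v) ∈ sigmaSet N₁ N₂ N₃ ∧
      ∀ x y z : ℝ,
        ((eval ![x, y, z] p : ℝ) : ℂ)
          = ∑ δ ∈ Dbox N₁ N₂ N₃, q δ * calderonTerm N₁ N₂ N₃ δ x y z := by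
  refine ⟨qdef N₁ N₂ N₃ p, ⟨⟨qdef N₁ N₂ N₃ p, rfl⟩, ?_⟩, fun x y z =>
    (calderon_id N₁ N₂ N₃ p hdeg x y z).symm⟩
  -- nonnegativity
  have hgood : ∀ w : ℝ × ℝ × ℝ, Real.sin (w.1/2) ≠ 0 → Real.sin (w.2.1/2) ≠ 0 →
      Real.sin (w.2.2/2) ≠ 0 → 0 ≤ ∑ δ ∈ Dbox N₁ N₂ N₃, qdef N₁ N₂ N₃ p δ * eChar δ w := by
    intro w h1 h2 h3
    rw [good_point N₁ N₂ N₃ _ w h1 h2 h3,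
      calderon_id N₁ N₂ N₃ p hdeg]
    rw [← Complex.ofReal_mul]
    rw [Complex.zero_le_real]
    apply mul_nonneg
    · have e1 : Even (2*N₁) := even_two_mul N₁
      have e2 : Even (2*N₂) := even_two_mul N₂
      have e3 : Even (2*N₃) := even_two_mul N₃
      exact mul_nonneg (mul_nonneg (e1.pow_nonneg _) (e2.pow_nonneg _)) (e3.pow_nonneg _)
    · exact hpos _
  intro v
  set f : ℝ × ℝ × ℝ → ℂ := fun w => ∑ δ ∈ Dbox N₁ N₂ N₃, qdef N₁ N₂ N₃ p δ * eChar δ w with hf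
  show 0 ≤ f v
  set g : ℝ → ℕ → ℝ := fun c n => c + (if Real.sin (c/2) = 0 then (1:ℝ)/((n:ℝ)+1) else 0)
    with hg
  have hgne : ∀ c n, Real.sin (g c n / 2) ≠ 0 := fun c n => sin_half_ne_shift c n
  have hgt : ∀ c : ℝ, Filter.Tendsto (g c) Filter.atTop (nhds c) := by
    intro c
    rw [hg]
    by_cases h : Real.sin (c/2) = 0
    · simp only [h, if_pos]
      have := tendsto_one_div_add_atTop_nhds_zero_nat (𝕜 := ℝ)
      have h2 : Filter.Tendsto (fun n : ℕ => c + 1/((n:ℝ)+1)) Filter.atTop (nhds (c + 0)) :=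
        Filter.Tendsto.const_add c (by exact_mod_cast this)
      simpa using h2
    · simp [h]
  set u : ℕ → ℝ × ℝ × ℝ := fun n => (g v.1 n, g v.2.1 n, g v.2.2 n) with hu
  have hut : Filter.Tendsto u Filter.atTop (nhds v) := by
    have : Filter.Tendsto u Filter.atTop (nhds (v.1, v.2.1, v.2.2)) :=
      ((hgt v.1).prodMk_nhds ((hgt v.2.1).prodMk_nhds (hgt v.2.2)))
    simpa using this
  have hft : Filter.Tendsto (fun n => f (u n)) Filter.atTop (nhds (f v)) :=
    ((f_continuous N₁ N₂ N₃ (qdef N₁ N₂ N₃ p)).tendsto v).comp hut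
  refine ge_of_tendsto hft (Filter.Eventually.of_forall fun n => ?_)
  exact hgood (u n) (hgne v.1 n) (hgne v.2.1 n) (hgne v.2.2 n)
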